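/- For every integer n ≥ 2 and real x > 0, the Turan-type inequality (ψ₂⁽ⁿ⁾(x+1))² ≤ ψ₂⁽ⁿ⁾(x) · ψ₂⁽ⁿ⁾(x+2) holds. -/

import Mathlib

noncomputable def psi2 (n : ℕ) (x : ℝ) : ℝ :=
  (-1) ^ (n + 1) * (n.factorial : ℝ) * ∑' k : ℕ, (1 + (k : ℝ)) / (x + k) ^ (n + 1)

lemma S_summable (n : ℕ) (hn : 2 ≤ n) (y : ℝ) (hy : 0 < y) :
    Summable (fun k : ℕ => (1 + (k : ℝ)) / (y + k) ^ (n + 1)) := by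
  set m := min y 1 with hm
  have hm0 : 0 < m := lt_min hy one_pos
  have hbase : Summable (fun k : ℕ => 1 / ((k : ℝ) + 1) ^ n) := by
    have h1 : Summable (fun k : ℕ => 1 / (k : ℝ) ^ n) :=
      Real.summable_one_div_nat_pow.mpr hn
    have := (summable_nat_add_iff 1).mpr h1
    exact this.congr fun k => by push_cast; ring
  have hsum : Summable (fun k : ℕ => (1 / m) ^ (n + 1) * (1 / ((k : ℝ) + 1) ^ n)) :=
    hbase.mul_left _
  refine Summable.of_nonneg_of_le (fun k => by positivity) (fun k => ?_) hsum
  have hk1 : (0 : ℝ) < 1 + k := by positivity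
  have hle : m * (1 + (k : ℝ)) ≤ y + k := by
    have h1 : m ≤ y := min_le_left _ _
    have h2 : m ≤ 1 := min_le_right _ _
    nlinarith [Nat.cast_nonneg (α := ℝ) k]
  have hpow : (m * (1 + (k : ℝ))) ^ (n + 1) ≤ (y + k) ^ (n + 1) :=
    pow_le_pow_left₀ (by positivity) hle _
  calc (1 + (k : ℝ)) / (y + k) ^ (n + 1)
      ≤ (1 + (k : ℝ)) / (m * (1 + (k : ℝ))) ^ (n + 1) :=
        div_le_div_of_nonneg_left (by positivity) (by positivity) hpow
    _ = (1 / m) ^ (n + 1) * (1 / ((k : ℝ) + 1) ^ n) := by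
        rw [mul_pow, pow_succ (1 + (k : ℝ))]
        field_simp
        have hm1 : m ≠ 0 := hm0.ne'
        rw [mul_comm (m ^ (n + 1)), mul_assoc, ← mul_pow, mul_one_div_cancel hm1, one_pow, mul_one, add_comm]

lemma S_cs (n : ℕ) (hn : 2 ≤ n) (x : ℝ) (hx : 0 < x) :
    (∑' k : ℕ, (1 + (k : ℝ)) / (x + 1 + k) ^ (n + 1)) ^ 2 ≤
    (∑' k : ℕ, (1 + (k : ℝ)) / (x + k) ^ (n + 1)) *
    ∑' k : ℕ, (1 + (k : ℝ)) / (x + 2 + k) ^ (n + 1) := by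
  set a : ℕ → ℝ := fun k => (1 + (k : ℝ)) / (x + k) ^ (n + 1) with ha
  set b : ℕ → ℝ := fun k => (1 + (k : ℝ)) / (x + 2 + k) ^ (n + 1) with hb
  set c : ℕ → ℝ := fun k => (1 + (k : ℝ)) / (x + 1 + k) ^ (n + 1) with hc
  have hsa : Summable a := S_summable n hn x hx
  have hsb : Summable b := S_summable n hn (x + 2) (by linarith)
  have hsc : Summable c := S_summable n hn (x + 1) (by linarith)
  have hca : ∀ k, 0 ≤ a k := fun k => by positivity
  have hcb : ∀ k, 0 ≤ b k := fun k => by positivity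
  have hcc : ∀ k, 0 ≤ c k := fun k => by positivity
  -- pointwise: c k ≤ √(a k) * √(b k)
  have hpt : ∀ k : ℕ, c k ≤ Real.sqrt (a k) * Real.sqrt (b k) := by
    intro k
    rw [← Real.sqrt_mul (hca k)]
    rw [← Real.sqrt_sq (hcc k)]
    apply Real.sqrt_le_sqrt
    have hk : (0 : ℝ) ≤ (k : ℝ) := Nat.cast_nonneg k
    have h1 : (x + k) * (x + 2 + k) ≤ (x + 1 + k) ^ 2 := by nlinarith
    have h2 : ((x + k) * (x + 2 + k)) ^ (n + 1) ≤ ((x + 1 + k) ^ 2) ^ (n + 1) :=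
      pow_le_pow_left₀ (by nlinarith) h1 _
    have hpos : (0 : ℝ) < (x + k) * (x + 2 + k) := by nlinarith
    rw [ha, hb, hc]
    simp only
    rw [div_pow, div_mul_div_comm, ← mul_pow,
      show (1 + (k:ℝ)) * (1 + (k:ℝ)) = (1 + (k:ℝ)) ^ 2 by ring]
    apply div_le_div_of_nonneg_left (by positivity) (by positivity)
    calc ((x + k) * (x + 2 + k)) ^ (n + 1) ≤ ((x + 1 + k) ^ 2) ^ (n + 1) := h2
      _ = ((x + 1 + k) ^ (n + 1)) ^ 2 := by rw [← pow_mul, ← pow_mul, Nat.mul_comm]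
  -- finite-sum bound
  have hfin : ∀ s : Finset ℕ, (∑ k ∈ s, c k) ^ 2 ≤ (∑' k, a k) * ∑' k, b k := by
    intro s
    have h1 : ∑ k ∈ s, c k ≤ ∑ k ∈ s, Real.sqrt (a k) * Real.sqrt (b k) :=
      Finset.sum_le_sum fun k _ => hpt k
    have h2 : (∑ k ∈ s, Real.sqrt (a k) * Real.sqrt (b k)) ^ 2 ≤
        (∑ k ∈ s, Real.sqrt (a k) ^ 2) * ∑ k ∈ s, Real.sqrt (b k) ^ 2 :=
      Finset.sum_mul_sq_le_sq_mul_sq s _ _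
    have h3 : (∑ k ∈ s, Real.sqrt (a k) ^ 2) = ∑ k ∈ s, a k :=
      Finset.sum_congr rfl fun k _ => Real.sq_sqrt (hca k)
    have h4 : (∑ k ∈ s, Real.sqrt (b k) ^ 2) = ∑ k ∈ s, b k :=
      Finset.sum_congr rfl fun k _ => Real.sq_sqrt (hcb k)
    have h5 : ∑ k ∈ s, a k ≤ ∑' k, a k := Summable.sum_le_tsum s (fun k _ => hca k) hsa
    have h6 : ∑ k ∈ s, b k ≤ ∑' k, b k := Summable.sum_le_tsum s (fun k _ => hcb k) hsb
    have hs0 : 0 ≤ ∑ k ∈ s, c k := Finset.sum_nonneg fun k _ => hcc k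
    have hs1 : 0 ≤ ∑ k ∈ s, Real.sqrt (a k) * Real.sqrt (b k) :=
      Finset.sum_nonneg fun k _ => mul_nonneg (Real.sqrt_nonneg _) (Real.sqrt_nonneg _)
    calc (∑ k ∈ s, c k) ^ 2 ≤ (∑ k ∈ s, Real.sqrt (a k) * Real.sqrt (b k)) ^ 2 :=
          pow_le_pow_left₀ hs0 h1 2
      _ ≤ (∑ k ∈ s, a k) * ∑ k ∈ s, b k := by rw [← h3, ← h4]; exact h2
      _ ≤ (∑' k, a k) * ∑' k, b k := by
          have hA : 0 ≤ ∑ k ∈ s, a k := Finset.sum_nonneg fun k _ => hca k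
          have hB : 0 ≤ ∑ k ∈ s, b k := Finset.sum_nonneg fun k _ => hcb k
          exact mul_le_mul h5 h6 hB (le_trans hA h5)
  -- pass to the limit
  have htend : Filter.Tendsto (fun N : ℕ => (∑ k ∈ Finset.range N, c k) ^ 2) Filter.atTop
      (nhds ((∑' k, c k) ^ 2)) :=
    hsc.hasSum.tendsto_sum_nat.pow 2
  exact le_of_tendsto' htend fun N => hfin (Finset.range N)

theorem stmt_5 (n : ℕ) (hn : 2 ≤ n) (x : ℝ) (hx : 0 < x) :
    (psi2 n (x + 1)) ^ 2 ≤ psi2 n x * psi2 n (x + 2) := by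
  have hcs := S_cs n hn x hx
  unfold psi2
  set e : ℝ := (-1) ^ (n + 1) * (n.factorial : ℝ) with he
  set A := ∑' k : ℕ, (1 + (k : ℝ)) / (x + k) ^ (n + 1)
  set B := ∑' k : ℕ, (1 + (k : ℝ)) / (x + 2 + k) ^ (n + 1)
  set C := ∑' k : ℕ, (1 + (k : ℝ)) / (x + 1 + k) ^ (n + 1)
  calc (e * C) ^ 2 = e ^ 2 * C ^ 2 := by ring
    _ ≤ e ^ 2 * (A * B) := mul_le_mul_of_nonneg_left hcs (sq_nonneg e)
    _ = (e * A) * (e * B) := by ring
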